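/- Suppose all n players use the same memory-1 strategy p (i.e., k = n−1, so the clustered states are (A,x) with A ∈ {C,D} and x ∈ {0,…,n−1}). Let 0 < δ < 1 and let v and μ be the discounted mean distributions of the full and reduced chains (v = (1−δ) Σ_{t=0}^∞ δ^t v(0) M^t and μ = (1−δ) Σ_{t=0}^∞ δ^t μ(0) (M')^t). Then the cooperation rate computed from the full chain equals that computed from the reduced chain: Σ_{h ∈ {C,D}^n} (σ(h)/n) v_h = Σ_{x=0}^{n−1} μ_{(C,x)} (x+1)/n + Σ_{x=0}^{n−1} μ_{(D,x)} x/n. -/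

import Mathlib

open Finset Matrix
open scoped Classical

noncomputable section

/-- A memory-1 strategy: an initial cooperation probability `init` and conditional
cooperation probabilities `cond A j`: the probability to cooperate in the next round
when one's own action in the current round was `A` (`true` = cooperate) and exactly
`j` co-players cooperated. -/
structure Mem1 where
  init : ℝ
  cond : Bool → ℕ → ℝ

/-- All entries of the strategy lie in `[0,1]`. -/
def Mem1.valid (p : Mem1) : Prop :=
  p.init ∈ Set.Icc (0:ℝ) 1 ∧ ∀ A j, p.cond A j ∈ Set.Icc (0:ℝ) 1

/-- A full state: the action of each of the `n` players (`true` = cooperate). -/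
abbrev FullState (n : ℕ) := Fin n → Bool

/-- The number of cooperators `σ(h)` in a full state. -/
def nCoop {n : ℕ} (h : FullState n) : ℕ :=
  (Finset.univ.filter fun i => h i = true).card

/-- The full transition matrix `M` on the `2^n` full states, given each player's
memory-1 strategy: `m_{h,h'} = ∏ i u_i`, where `u_i` is player `i`'s probability of
choosing action `h' i` given that in state `h` his action was `h i` and
`σ(h) - f(h i)` of his co-players cooperated. -/
def fullM {n : ℕ} (strat : Fin n → Mem1) : Matrix (FullState n) (FullState n) ℝ :=
  Matrix.of fun h h' => ∏ i,
    (if h' i then (strat i).cond (h i) (nCoop h - if h i then 1 else 0)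
     else 1 - (strat i).cond (h i) (nCoop h - if h i then 1 else 0))

/-- The initial full-state distribution `v(0)`: each player cooperates independently
with the initial probability of his own strategy, `v(0)_h = ∏ i |1 - f(A_i) - p^i_0|`. -/
def fullInit {n : ℕ} (strat : Fin n → Mem1) : FullState n → ℝ :=
  fun h => ∏ i, |1 - (if h i then (1:ℝ) else 0) - (strat i).init|

/-- Binomial transfer factor: for a block of `tot` co-players of one strategy of which
`x` cooperated in the last round, the probability that exactly `x'` of them cooperate
in the next round, where previous cooperators cooperate with probability `pc` and
previous defectors with probability `pd`:
`Σ_{j=0}^{x'} C(x,j) pc^j (1-pc)^{x-j} C(tot-x, x'-j) pd^{x'-j} (1-pd)^{(tot-x)-(x'-j)}`. -/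
def transfer (pc pd : ℝ) (x tot x' : ℕ) : ℝ :=
  ∑ j ∈ Finset.range (x' + 1),
    (x.choose j : ℝ) * pc ^ j * (1 - pc) ^ (x - j) *
    ((tot - x).choose (x' - j) : ℝ) * pd ^ (x' - j) * (1 - pd) ^ ((tot - x) - (x' - j))

/-- The discounted mean distribution `(1-δ) Σ_{t=0}^∞ δ^t (w₀ T^t)`. -/
def discMean {α : Type*} [Fintype α] [DecidableEq α]
    (δ : ℝ) (w0 : α → ℝ) (T : Matrix α α ℝ) : α → ℝ :=
  fun j => (1 - δ) * ∑' t : ℕ, δ ^ t * (w0 ᵥ* T ^ t) j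

/-- The focal player's one-round payoff in full state `h`: `a_{σ(h)-1}` if he
cooperates, `b_{σ(h)}` if he defects. -/
def focalPayoff {n : ℕ} (focal : Fin n) (a b : ℕ → ℝ) (h : FullState n) : ℝ :=
  if h focal then a (nCoop h - 1) else b (nCoop h)

/-- The homogeneous reduced transition matrix `M'` on the `2n` clustered states `(A,x)`
with `A ∈ {C,D}`, `x ∈ {0,…,n-1}`, when all players use the same strategy `p`. -/
def redMHom (n : ℕ) (p : Mem1) : Matrix (Bool × Fin n) (Bool × Fin n) ℝ :=
  Matrix.of fun s s' =>
    match s, s' with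
    | (A, x), (A', x') =>
      |1 - (if A' then (1:ℝ) else 0) - p.cond A (x:ℕ)| *
      transfer (p.cond true ((x:ℕ) + (if A then 1 else 0) - 1))
               (p.cond false ((x:ℕ) + (if A then 1 else 0))) (x:ℕ) (n-1) (x':ℕ)

/-- The homogeneous initial clustered distribution `μ(0)`. -/
def redInitHom (n : ℕ) (p : Mem1) : Bool × Fin n → ℝ :=
  fun s => match s with
  | (A, x) =>
    |1 - (if A then (1:ℝ) else 0) - p.init| *
    ((n-1).choose (x:ℕ) : ℝ) * p.init ^ (x:ℕ) * (1 - p.init) ^ ((n-1) - (x:ℕ))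

/-- The homogeneous cluster: full states where the focal player plays `A` and exactly
`x` of his co-players cooperate. -/
def clusterHom {n : ℕ} (focal : Fin n) (A : Bool) (x : ℕ) : Finset (FullState n) :=
  Finset.univ.filter fun h =>
    h focal = A ∧ (Finset.univ.filter fun i => i ≠ focal ∧ h i = true).card = x


section Aux

variable {ι : Type*} [DecidableEq ι]

lemma prod_ite_mem_const (s S : Finset ι) (hS : S ⊆ s) (a b : ℝ) :
    (∏ i ∈ s, if i ∈ S then a else b) = a ^ S.card * b ^ (s.card - S.card) := by
  rw [Finset.prod_ite, Finset.prod_const, Finset.prod_const]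
  have h1 : s.filter (fun i => i ∈ S) = S := by
    rw [Finset.filter_mem_eq_inter, Finset.inter_eq_right.mpr hS]
  have h2 : s.filter (fun i => i ∉ S) = s \ S := by
    ext i; simp [Finset.mem_sdiff]
  rw [h1, h2, Finset.card_sdiff_of_subset hS]

lemma sum_powersetCard_two_groups (s : Finset ι) (c : ι → Bool) (pc pd : ℝ) (m : ℕ) :
    (∑ S ∈ s.powersetCard m, ∏ i ∈ s,
       if i ∈ S then (if c i then pc else pd) else (if c i then 1-pc else 1-pd))
    = transfer pc pd (s.filter fun i => c i = true).card s.card m := by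
  set s1 := s.filter (fun i => c i = true) with hs1
  set s2 := s.filter (fun i => ¬ c i = true) with hs2
  have hdisj : Disjoint s1 s2 := Finset.disjoint_filter_filter_not s s _
  have hunion : s1 ∪ s2 = s := Finset.filter_union_filter_not_eq _ s
  have hcard2 : s2.card = s.card - s1.card := by
    have hsd : s2 = s \ s1 := by
      ext i
      simp only [hs1, hs2, Finset.mem_sdiff, Finset.mem_filter]
      tauto
    rw [hsd, Finset.card_sdiff_of_subset (Finset.filter_subset _ _)]
  -- term evaluation
  have hterm : ∀ S ∈ s.powersetCard m,
      (∏ i ∈ s, if i ∈ S then (if c i then pc else pd) else (if c i then 1-pc else 1-pd))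
      = pc ^ (S ∩ s1).card * (1-pc) ^ (s1.card - (S ∩ s1).card)
        * (pd ^ (m - (S ∩ s1).card) * (1-pd) ^ (s2.card - (m - (S ∩ s1).card))) := by
    intro S hS
    rw [Finset.mem_powersetCard] at hS
    obtain ⟨hSs, hScard⟩ := hS
    have hsplit : S ∩ s1 ∪ S ∩ s2 = S := by
      rw [← Finset.inter_union_distrib_left, hunion, Finset.inter_eq_left.mpr hSs]
    have hdisj' : Disjoint (S ∩ s1) (S ∩ s2) :=
      hdisj.mono inter_subset_right inter_subset_right
    have hcards : (S ∩ s1).card + (S ∩ s2).card = m := by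
      rw [← Finset.card_union_of_disjoint hdisj', hsplit, hScard]
    have hc2 : (S ∩ s2).card = m - (S ∩ s1).card := by omega
    rw [← hunion, Finset.prod_union hdisj]
    have e1 : (∏ i ∈ s1, if i ∈ S then (if c i then pc else pd) else (if c i then 1-pc else 1-pd))
        = ∏ i ∈ s1, if i ∈ S ∩ s1 then pc else 1-pc := by
      apply Finset.prod_congr rfl
      intro i hi
      have hci : c i = true := (Finset.mem_filter.mp hi).2
      simp [hci, Finset.mem_inter, hi]
    have e2 : (∏ i ∈ s2, if i ∈ S then (if c i then pc else pd) else (if c i then 1-pc else 1-pd))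
        = ∏ i ∈ s2, if i ∈ S ∩ s2 then pd else 1-pd := by
      apply Finset.prod_congr rfl
      intro i hi
      have hci : ¬ c i = true := (Finset.mem_filter.mp hi).2
      simp [hci, Finset.mem_inter, hi]
    rw [e1, e2, prod_ite_mem_const s1 (S ∩ s1) inter_subset_right,
      prod_ite_mem_const s2 (S ∩ s2) inter_subset_right, hc2]
  rw [Finset.sum_congr rfl hterm]
  -- fiberwise sum over j = (S ∩ s1).card
  rw [← Finset.sum_fiberwise_of_maps_to (g := fun S => (S ∩ s1).card)
      (t := Finset.range (m+1)) (fun S hS => by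
        rw [Finset.mem_powersetCard] at hS
        simp only [Finset.mem_range]
        have hsub : S ∩ s1 ⊆ S := Finset.inter_subset_left
        have := Finset.card_le_card hsub
        omega)]
  unfold transfer
  apply Finset.sum_congr rfl
  intro j hj
  rw [Finset.mem_range] at hj
  -- each fiber term is constant
  have hconst : ∀ S ∈ (s.powersetCard m).filter (fun S => (S ∩ s1).card = j),
      pc ^ (S ∩ s1).card * (1-pc) ^ (s1.card - (S ∩ s1).card)
        * (pd ^ (m - (S ∩ s1).card) * (1-pd) ^ (s2.card - (m - (S ∩ s1).card)))
      = pc ^ j * (1-pc) ^ (s1.card - j) * (pd ^ (m - j) * (1-pd) ^ (s2.card - (m - j))) := by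
    intro S hS
    rw [(Finset.mem_filter.mp hS).2]
  rw [Finset.sum_congr rfl hconst, Finset.sum_const, nsmul_eq_mul]
  -- count the fiber
  have hcount : ((s.powersetCard m).filter (fun S => (S ∩ s1).card = j)).card
      = Nat.choose s1.card j * Nat.choose (s.card - s1.card) (m - j) := by
    rw [← hcard2, ← Finset.card_powersetCard, ← Finset.card_powersetCard, ← Finset.card_product]
    apply Finset.card_nbij' (i := fun S => (S ∩ s1, S ∩ s2)) (j := fun P => P.1 ∪ P.2)
    · intro S hS
      rw [Finset.mem_coe, Finset.mem_filter, Finset.mem_powersetCard] at hS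
      obtain ⟨⟨hSs, hScard⟩, hj'⟩ := hS
      have hsplit : S ∩ s1 ∪ S ∩ s2 = S := by
        rw [← Finset.inter_union_distrib_left, hunion, Finset.inter_eq_left.mpr hSs]
      have hdisj' : Disjoint (S ∩ s1) (S ∩ s2) :=
        hdisj.mono inter_subset_right inter_subset_right
      have hcards : (S ∩ s1).card + (S ∩ s2).card = m := by
        rw [← Finset.card_union_of_disjoint hdisj', hsplit, hScard]
      simp only [Finset.mem_coe, Finset.mem_product, Finset.mem_powersetCard]
      exact ⟨⟨inter_subset_right, hj'⟩, ⟨inter_subset_right, by omega⟩⟩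
    · intro P hP
      rw [Finset.mem_coe, Finset.mem_product, Finset.mem_powersetCard, Finset.mem_powersetCard] at hP
      obtain ⟨⟨h1s, h1c⟩, ⟨h2s, h2c⟩⟩ := hP
      have hd : Disjoint P.1 P.2 := hdisj.mono h1s h2s
      rw [Finset.mem_coe, Finset.mem_filter, Finset.mem_powersetCard]
      refine ⟨⟨Finset.union_subset (h1s.trans (hunion ▸ Finset.subset_union_left))
        (h2s.trans (hunion ▸ Finset.subset_union_right)), ?_⟩, ?_⟩
      · rw [Finset.card_union_of_disjoint hd, h1c, h2c]; omega
      · have : (P.1 ∪ P.2) ∩ s1 = P.1 := by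
          rw [Finset.union_inter_distrib_right, Finset.inter_eq_left.mpr h1s,
            Finset.disjoint_iff_inter_eq_empty.mp (Finset.disjoint_of_subset_left h2s hdisj.symm), Finset.union_empty]
        rw [this, h1c]
    · intro S hS
      rw [Finset.mem_coe, Finset.mem_filter, Finset.mem_powersetCard] at hS
      obtain ⟨⟨hSs, _⟩, _⟩ := hS
      dsimp only
      rw [← Finset.inter_union_distrib_left, hunion, Finset.inter_eq_left.mpr hSs]
    · intro P hP
      rw [Finset.mem_coe, Finset.mem_product, Finset.mem_powersetCard, Finset.mem_powersetCard] at hP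
      obtain ⟨⟨h1s, _⟩, ⟨h2s, _⟩⟩ := hP
      have e1 : (P.1 ∪ P.2) ∩ s1 = P.1 := by
        rw [Finset.union_inter_distrib_right, Finset.inter_eq_left.mpr h1s,
          Finset.disjoint_iff_inter_eq_empty.mp (Finset.disjoint_of_subset_left h2s hdisj.symm), Finset.union_empty]
      have e2 : (P.1 ∪ P.2) ∩ s2 = P.2 := by
        rw [Finset.union_inter_distrib_right, Finset.inter_eq_left.mpr h2s,
          Finset.disjoint_iff_inter_eq_empty.mp (Finset.disjoint_of_subset_left h1s hdisj), Finset.empty_union]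
      rw [Prod.ext_iff]; exact ⟨e1, e2⟩
  rw [hcount, ← hcard2]
  push_cast
  ring

variable {n : ℕ}

/-- number of cooperators among co-players -/
def coCount (focal : Fin n) (h : FullState n) : ℕ :=
  (Finset.univ.filter fun i => i ≠ focal ∧ h i = true).card

def fiber (focal : Fin n) (A : Bool) (x : ℕ) : Finset (FullState n) :=
  Finset.univ.filter fun h => h focal = A ∧ coCount focal h = x

lemma sum_fiber_eq (focal : Fin n) (A' : Bool) (x' : ℕ) (f : Fin n → Bool → ℝ) :
    (∑ h' ∈ fiber focal A' x', ∏ i, f i (h' i))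
    = f focal A' * ∑ S ∈ (Finset.univ.erase focal).powersetCard x',
        ∏ i ∈ Finset.univ.erase focal, f i (decide (i ∈ S)) := by
  rw [Finset.mul_sum]
  apply Finset.sum_nbij' (i := fun h' => Finset.univ.filter (fun i => i ≠ focal ∧ h' i = true))
    (j := fun S => fun i => if i = focal then A' else decide (i ∈ S))
  · intro h' hh'
    rw [fiber, Finset.mem_filter] at hh'
    obtain ⟨-, hA, hx⟩ := hh'
    rw [Finset.mem_powersetCard]
    constructor
    · intro i hi
      rw [Finset.mem_filter] at hi
      exact Finset.mem_erase.mpr ⟨hi.2.1, Finset.mem_univ i⟩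
    · exact hx
  · intro S hS
    rw [Finset.mem_powersetCard] at hS
    obtain ⟨hSsub, hScard⟩ := hS
    rw [fiber, Finset.mem_filter]
    refine ⟨Finset.mem_univ _, by simp, ?_⟩
    rw [coCount]
    have : (Finset.univ.filter fun i =>
        i ≠ focal ∧ (if i = focal then A' else decide (i ∈ S)) = true) = S := by
      ext i
      simp only [Finset.mem_filter, Finset.mem_univ, true_and]
      constructor
      · rintro ⟨hne, hd⟩
        rw [if_neg hne] at hd
        exact of_decide_eq_true hd
      · intro hi
        have hne : i ≠ focal := (Finset.mem_erase.mp (hSsub hi)).1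
        exact ⟨hne, by rw [if_neg hne]; exact decide_eq_true hi⟩
    rw [this, hScard]
  · intro h' hh'
    rw [fiber, Finset.mem_filter] at hh'
    obtain ⟨-, hA, hx⟩ := hh'
    funext i
    by_cases hi : i = focal
    · subst hi; simp [hA]
    · rw [if_neg hi]
      by_cases hb : h' i = true
      · rw [hb]; exact decide_eq_true (by simp [hi, hb])
      · have hb' : h' i = false := by simpa using hb
        rw [hb']; exact decide_eq_false (by simp [hb'])
  · intro S hS
    rw [Finset.mem_powersetCard] at hS
    obtain ⟨hSsub, -⟩ := hS
    ext i
    simp only [Finset.mem_filter, Finset.mem_univ, true_and]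
    constructor
    · rintro ⟨hne, hd⟩
      rw [if_neg hne] at hd
      exact of_decide_eq_true hd
    · intro hi
      have hne : i ≠ focal := (Finset.mem_erase.mp (hSsub hi)).1
      exact ⟨hne, by rw [if_neg hne]; exact decide_eq_true hi⟩
  · intro h' hh'
    rw [fiber, Finset.mem_filter] at hh'
    obtain ⟨-, hA, hx⟩ := hh'
    have := Finset.mul_prod_erase Finset.univ (fun i => f i (h' i)) (Finset.mem_univ focal)
    rw [← this]
    rw [hA]
    congr 1
    apply Finset.prod_congr rfl
    intro i hi
    have hne : i ≠ focal := (Finset.mem_erase.mp hi).1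
    congr 1
    by_cases hb : h' i = true
    · rw [hb]; exact (decide_eq_true (by simp [hne, hb])).symm
    · have hb' : h' i = false := by simpa using hb
      rw [hb']; exact (decide_eq_false (by simp [hb'])).symm

lemma nCoop_eq (focal : Fin n) (h : FullState n) :
    nCoop h = coCount focal h + (if h focal then 1 else 0) := by
  rw [nCoop, coCount]
  have hsplit : (Finset.univ.filter fun i => h i = true)
      = (Finset.univ.filter fun i => i ≠ focal ∧ h i = true)
        ∪ (Finset.univ.filter fun i => i = focal ∧ h i = true) := by
    ext i
    simp only [Finset.mem_filter, Finset.mem_univ, true_and, Finset.mem_union]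
    tauto
  have hdisj : Disjoint (Finset.univ.filter fun i => i ≠ focal ∧ h i = true)
      (Finset.univ.filter fun i => i = focal ∧ h i = true) := by
    rw [Finset.disjoint_filter]
    tauto
  rw [hsplit, Finset.card_union_of_disjoint hdisj]
  congr 1
  by_cases hf : h focal = true
  · rw [if_pos hf]
    have : (Finset.univ.filter fun i => i = focal ∧ h i = true) = {focal} := by
      ext i
      simp only [Finset.mem_filter, Finset.mem_univ, true_and, Finset.mem_singleton]
      constructor
      · exact fun hi => hi.1
      · intro hi; subst hi; exact ⟨rfl, hf⟩
    rw [this, Finset.card_singleton]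
  · rw [if_neg hf]
    have : (Finset.univ.filter fun i => i = focal ∧ h i = true) = ∅ := by
      ext i
      simp only [Finset.mem_filter, Finset.mem_univ, true_and, Finset.notMem_empty,
        iff_false, not_and]
      intro hi; subst hi; exact hf
    rw [this, Finset.card_empty]

lemma erase_card (focal : Fin n) : (Finset.univ.erase focal).card = n - 1 := by
  rw [Finset.card_erase_of_mem (Finset.mem_univ focal), Finset.card_univ, Fintype.card_fin]

lemma coCount_le (focal : Fin n) (h : FullState n) : coCount focal h ≤ n - 1 := by
  rw [← erase_card focal]
  apply Finset.card_le_card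
  intro i hi
  rw [Finset.mem_filter] at hi
  exact Finset.mem_erase.mpr ⟨hi.2.1, Finset.mem_univ i⟩

/-- One-step lumpability. -/
lemma lump_step (p : Mem1) (hp : p.valid) (focal : Fin n) (A : Bool) (x : ℕ)
    (h : FullState n) (hh : h ∈ fiber focal A x) (A' : Bool) (x' : ℕ) :
    (∑ h' ∈ fiber focal A' x', fullM (fun _ => p) h h')
    = |1 - (if A' then (1:ℝ) else 0) - p.cond A x| *
      transfer (p.cond true (x + (if A then 1 else 0) - 1))
               (p.cond false (x + (if A then 1 else 0))) x (n-1) x' := by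
  rw [fiber, Finset.mem_filter] at hh
  obtain ⟨-, hA, hx⟩ := hh
  have hnc : nCoop h = x + (if A then 1 else 0) := by
    rw [nCoop_eq focal, hx, hA]
  set q : Fin n → ℝ := fun i => p.cond (h i) (nCoop h - if h i then 1 else 0) with hq
  set F : Fin n → Bool → ℝ := fun i b => if b then q i else 1 - q i with hF
  have hM : ∀ h', fullM (fun _ => p) h h' = ∏ i, F i (h' i) := by
    intro h'
    rw [fullM, Matrix.of_apply, hF]
  rw [Finset.sum_congr rfl (fun h' _ => hM h'), sum_fiber_eq focal A' x' F]
  -- the focal factor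
  have hfocal : (F focal A') = |1 - (if A' then (1:ℝ) else 0) - p.cond A x| := by
    have hqf : q focal = p.cond A x := by
      rw [hq]
      simp only []
      rw [hA, hnc]
      congr 1
      cases A <;> simp
    obtain ⟨h0, h1⟩ := hp.2 A x
    cases A' <;> simp [hF, hqf] <;> rw [abs_of_nonneg] <;> linarith
  -- co-player sum
  have hco : (∑ S ∈ (Finset.univ.erase focal).powersetCard x',
        ∏ i ∈ Finset.univ.erase focal, F i (decide (i ∈ S)))
      = transfer (p.cond true (x + (if A then 1 else 0) - 1))
               (p.cond false (x + (if A then 1 else 0))) x (n-1) x' := by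
    set pc := p.cond true (x + (if A then 1 else 0) - 1) with hpc
    set pd := p.cond false (x + (if A then 1 else 0)) with hpd
    have key := sum_powersetCard_two_groups (Finset.univ.erase focal) (fun i => h i) pc pd x'
    have hcard1 : ((Finset.univ.erase focal).filter fun i => (fun i => h i) i = true).card = x := by
      have he : ((Finset.univ.erase focal).filter fun i => h i = true)
          = Finset.univ.filter fun i => i ≠ focal ∧ h i = true := by
        ext i
        simp only [Finset.mem_filter, Finset.mem_erase, Finset.mem_univ, true_and,
          and_true] <;> tauto
      rw [he]
      exact hx
    rw [hcard1, erase_card focal] at key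
    rw [← key]
    apply Finset.sum_congr rfl
    intro S hS
    apply Finset.prod_congr rfl
    intro i hi
    have hne : i ≠ focal := (Finset.mem_erase.mp hi).1
    have hqi : q i = if h i then pc else pd := by
      rw [hq]
      simp only []
      by_cases hb : h i = true
      · rw [hb, if_pos rfl, if_pos rfl, hpc, hnc]
      · have hb' : h i = false := by simpa using hb
        rw [hb', if_neg (by simp), if_neg (by simp), hpd, hnc, Nat.sub_zero]
    by_cases hmem : i ∈ S
    · rw [if_pos hmem]
      have hFi : F i (decide (i ∈ S)) = q i := by rw [hF]; simp [hmem]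
      rw [hFi, hqi]
    · rw [if_neg hmem]
      have hFi : F i (decide (i ∈ S)) = 1 - q i := by rw [hF]; simp [hmem]
      rw [hFi, hqi]
      by_cases hb : h i = true <;> simp [hb]
  rw [hfocal, hco]

lemma lump_init (p : Mem1) (hp : p.valid) (focal : Fin n) (A : Bool) (x : ℕ) :
    (∑ h ∈ fiber focal A x, fullInit (fun _ => p) h)
    = |1 - (if A then (1:ℝ) else 0) - p.init| *
      ((n-1).choose x : ℝ) * p.init ^ x * (1 - p.init) ^ ((n-1) - x) := by
  obtain ⟨hp0, hp1⟩ := hp.1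
  set F : Fin n → Bool → ℝ := fun i b => |1 - (if b then (1:ℝ) else 0) - p.init| with hF
  have h1 : ∀ h : FullState n, fullInit (fun _ => p) h = ∏ i, F i (h i) := fun h => rfl
  rw [Finset.sum_congr rfl (fun h _ => h1 h), sum_fiber_eq focal A x F]
  have hFt : ∀ i : Fin n, F i true = p.init := by
    intro i
    show |1 - (if (true : Bool) = true then (1:ℝ) else 0) - p.init| = p.init
    rw [if_pos rfl]
    have : (1:ℝ) - 1 - p.init = -p.init := by ring
    rw [this, abs_neg, abs_of_nonneg hp0]
  have hFf : ∀ i : Fin n, F i false = 1 - p.init := by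
    intro i
    show |1 - (if (false : Bool) = true then (1:ℝ) else 0) - p.init| = 1 - p.init
    rw [if_neg (by simp)]
    have : (1:ℝ) - 0 - p.init = 1 - p.init := by ring
    rw [this, abs_of_nonneg (by linarith)]
  have hin : ∀ S ∈ (Finset.univ.erase focal).powersetCard x,
      (∏ i ∈ Finset.univ.erase focal, F i (decide (i ∈ S)))
      = p.init ^ x * (1 - p.init) ^ ((n-1) - x) := by
    intro S hS
    rw [Finset.mem_powersetCard] at hS
    have hc : ∀ i ∈ Finset.univ.erase focal,
        F i (decide (i ∈ S)) = if i ∈ S then p.init else 1 - p.init := by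
      intro i _
      by_cases hm : i ∈ S
      · rw [if_pos hm, decide_eq_true hm, hFt i]
      · rw [if_neg hm, decide_eq_false hm, hFf i]
    rw [Finset.prod_congr rfl hc, prod_ite_mem_const _ S hS.1, hS.2, erase_card focal]
  rw [Finset.sum_congr rfl hin, Finset.sum_const, Finset.card_powersetCard, erase_card focal,
    nsmul_eq_mul]
  have : F focal A = |1 - (if A then (1:ℝ) else 0) - p.init| := rfl
  rw [this]
  ring

lemma fullM_nonneg (p : Mem1) (hp : p.valid) (h h' : FullState n) :
    0 ≤ fullM (fun _ => p) h h' := by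
  rw [fullM, Matrix.of_apply]
  apply Finset.prod_nonneg
  intro i _
  obtain ⟨h0, h1⟩ := hp.2 (h i) (nCoop h - if h i then 1 else 0)
  by_cases hb : h' i = true <;> simp [hb] <;> linarith

lemma fullM_rowsum (p : Mem1) (hp : p.valid) (h : FullState n) :
    ∑ h' : FullState n, fullM (fun _ => p) h h' = 1 := by
  set G : Fin n → Bool → ℝ := fun i b => if b then p.cond (h i) (nCoop h - if h i then 1 else 0)
      else 1 - p.cond (h i) (nCoop h - if h i then 1 else 0) with hG
  have h1 : ∀ h' : FullState n, fullM (fun _ => p) h h' = ∏ i, G i (h' i) := fun h' => rfl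
  rw [Finset.sum_congr rfl (fun h' _ => h1 h'), ← Fintype.prod_sum G]
  rw [Finset.prod_eq_one]
  intro i _
  rw [Fintype.sum_bool]
  have hGt : G i true = p.cond (h i) (nCoop h - if h i then 1 else 0) := by
    show (if (true:Bool) = true then p.cond (h i) (nCoop h - if h i then 1 else 0)
      else 1 - p.cond (h i) (nCoop h - if h i then 1 else 0)) = _
    rw [if_pos rfl]
  have hGf : G i false = 1 - p.cond (h i) (nCoop h - if h i then 1 else 0) := by
    show (if (false:Bool) = true then p.cond (h i) (nCoop h - if h i then 1 else 0)
      else 1 - p.cond (h i) (nCoop h - if h i then 1 else 0)) = _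
    rw [if_neg (by simp)]
  rw [hGt, hGf]
  ring

lemma fullInit_nonneg (p : Mem1) (h : FullState n) : 0 ≤ fullInit (fun _ => p) h := by
  apply Finset.prod_nonneg
  intro i _
  exact abs_nonneg _

lemma fullInit_sum (p : Mem1) (hp : p.valid) :
    ∑ h : FullState n, fullInit (fun _ => p) h = 1 := by
  obtain ⟨hp0, hp1⟩ := hp.1
  set G : Fin n → Bool → ℝ := fun _ b => |1 - (if b then (1:ℝ) else 0) - p.init| with hG
  have h1 : ∀ h : FullState n, fullInit (fun _ => p) h = ∏ i, G i (h i) := fun h => rfl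
  rw [Finset.sum_congr rfl (fun h _ => h1 h), ← Fintype.prod_sum G]
  rw [Finset.prod_eq_one]
  intro i _
  rw [Fintype.sum_bool]
  have hGt : G i true = p.init := by
    show |1 - (if (true : Bool) = true then (1:ℝ) else 0) - p.init| = p.init
    rw [if_pos rfl]
    have e1 : (1:ℝ) - 1 - p.init = -p.init := by ring
    rw [e1, abs_neg, abs_of_nonneg hp0]
  have hGf : G i false = 1 - p.init := by
    show |1 - (if (false : Bool) = true then (1:ℝ) else 0) - p.init| = 1 - p.init
    rw [if_neg (by simp)]
    have e2 : (1:ℝ) - 0 - p.init = 1 - p.init := by ring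
    rw [e2, abs_of_nonneg (by linarith)]
  rw [hGt, hGf]
  ring

def proj (focal : Fin n) (h : FullState n) : Bool × Fin n :=
  (h focal, ⟨coCount focal h, lt_of_le_of_lt (coCount_le focal h) (Nat.sub_lt focal.pos one_pos)⟩)

lemma fiber_eq_filter (focal : Fin n) (s : Bool × Fin n) :
    Finset.univ.filter (fun h => proj focal h = s) = fiber focal s.1 (s.2 : ℕ) := by
  ext h
  simp only [Finset.mem_filter, Finset.mem_univ, true_and, fiber, proj, Prod.ext_iff, Fin.ext_iff]

lemma redMHom_apply (p : Mem1) (A : Bool) (x : Fin n) (A' : Bool) (x' : Fin n) :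
    redMHom n p (A, x) (A', x')
    = |1 - (if A' then (1:ℝ) else 0) - p.cond A (x:ℕ)| *
      transfer (p.cond true ((x:ℕ) + (if A then 1 else 0) - 1))
               (p.cond false ((x:ℕ) + (if A then 1 else 0))) (x:ℕ) (n-1) (x':ℕ) := rfl

lemma vecMul_pow_succ {α : Type*} [Fintype α] [DecidableEq α]
    (v : α → ℝ) (T : Matrix α α ℝ) (t : ℕ) (j : α) :
    (v ᵥ* T ^ (t+1)) j = ∑ i, (v ᵥ* T ^ t) i * T i j := by
  rw [pow_succ, ← Matrix.vecMul_vecMul]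
  simp [Matrix.vecMul, dotProduct]

lemma w_nonneg (p : Mem1) (hp : p.valid) (t : ℕ) (h : FullState n) :
    0 ≤ (fullInit (fun _ => p) ᵥ* (fullM (fun _ => p)) ^ t) h := by
  induction t generalizing h with
  | zero =>
    rw [pow_zero, Matrix.vecMul_one]
    exact fullInit_nonneg p h
  | succ t ih =>
    rw [vecMul_pow_succ]
    exact Finset.sum_nonneg fun i _ => mul_nonneg (ih i) (fullM_nonneg p hp i h)

lemma w_sum_one (p : Mem1) (hp : p.valid) (t : ℕ) :
    ∑ h : FullState n, (fullInit (fun _ => p) ᵥ* (fullM (fun _ => p)) ^ t) h = 1 := by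
  induction t with
  | zero =>
    rw [show ((fullM (fun _ => p) : Matrix (FullState n) (FullState n) ℝ)) ^ 0 = 1 from pow_zero _]
    simp only [Matrix.vecMul_one]
    exact fullInit_sum p hp
  | succ t ih =>
    rw [Finset.sum_congr rfl (fun h' _ => vecMul_pow_succ _ _ t h'), Finset.sum_comm]
    calc ∑ h : FullState n, ∑ h' : FullState n,
            (fullInit (fun _ => p) ᵥ* (fullM (fun _ => p)) ^ t) h * fullM (fun _ => p) h h'
        = ∑ h : FullState n, (fullInit (fun _ => p) ᵥ* (fullM (fun _ => p)) ^ t) h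
            * ∑ h' : FullState n, fullM (fun _ => p) h h' := by
          apply Finset.sum_congr rfl
          intro h _
          rw [Finset.mul_sum]
      _ = 1 := by
          rw [Finset.sum_congr rfl (fun h _ => by rw [fullM_rowsum p hp h, mul_one]), ih]

lemma w_le_one (p : Mem1) (hp : p.valid) (t : ℕ) (h : FullState n) :
    (fullInit (fun _ => p) ᵥ* (fullM (fun _ => p)) ^ t) h ≤ 1 := by
  have h1 := w_sum_one (n := n) p hp t
  have h2 := Finset.single_le_sum (f := fun h => (fullInit (fun _ => p) ᵥ* (fullM (fun _ => p)) ^ t) h)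
    (fun i _ => w_nonneg p hp t i) (Finset.mem_univ h)
  linarith

lemma fiber_sum_eq (p : Mem1) (hp : p.valid) (focal : Fin n) (t : ℕ) (s : Bool × Fin n) :
    (∑ h ∈ fiber focal s.1 (s.2 : ℕ), (fullInit (fun _ => p) ᵥ* (fullM (fun _ => p)) ^ t) h)
    = (redInitHom n p ᵥ* (redMHom n p) ^ t) s := by
  induction t generalizing s with
  | zero =>
    rw [pow_zero, pow_zero, Matrix.vecMul_one, Matrix.vecMul_one]
    obtain ⟨A, x⟩ := s
    exact lump_init p hp focal A (x : ℕ)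
  | succ t ih =>
    rw [Finset.sum_congr rfl (fun h' _ => vecMul_pow_succ _ _ t h'), Finset.sum_comm]
    have hstep : ∀ h : FullState n,
        (∑ h' ∈ fiber focal s.1 (s.2:ℕ),
          (fullInit (fun _ => p) ᵥ* (fullM (fun _ => p)) ^ t) h * fullM (fun _ => p) h h')
        = (fullInit (fun _ => p) ᵥ* (fullM (fun _ => p)) ^ t) h * redMHom n p (proj focal h) s := by
      intro h
      rw [← Finset.mul_sum]
      congr 1
      have hmem : h ∈ fiber focal (h focal) (coCount focal h) := by
        rw [fiber, Finset.mem_filter]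
        exact ⟨Finset.mem_univ _, rfl, rfl⟩
      obtain ⟨A', x'⟩ := s
      rw [redMHom_apply]
      exact lump_step p hp focal (h focal) (coCount focal h) h hmem A' (x' : ℕ)
    rw [Finset.sum_congr rfl (fun h _ => hstep h)]
    rw [← Finset.sum_fiberwise_of_maps_to (g := proj focal)
      (fun h _ => Finset.mem_univ (proj focal h)) _]
    have hfib : ∀ s'' : Bool × Fin n,
        (∑ h ∈ Finset.univ.filter (fun h => proj focal h = s''),
          (fullInit (fun _ => p) ᵥ* (fullM (fun _ => p)) ^ t) h * redMHom n p (proj focal h) s)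
        = (redInitHom n p ᵥ* (redMHom n p) ^ t) s'' * redMHom n p s'' s := by
      intro s''
      have : ∀ h ∈ Finset.univ.filter (fun h => proj focal h = s''),
          (fullInit (fun _ => p) ᵥ* (fullM (fun _ => p)) ^ t) h * redMHom n p (proj focal h) s
          = (fullInit (fun _ => p) ᵥ* (fullM (fun _ => p)) ^ t) h * redMHom n p s'' s := by
        intro h hh
        rw [(Finset.mem_filter.mp hh).2]
      rw [Finset.sum_congr rfl this, ← Finset.sum_mul, fiber_eq_filter, ih]
    rw [Finset.sum_congr rfl (fun s'' _ => hfib s''), vecMul_pow_succ]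

lemma summable_disc (p : Mem1) (hp : p.valid) (δ : ℝ) (hδ0 : 0 < δ) (hδ1 : δ < 1)
    (h : FullState n) :
    Summable (fun t : ℕ => δ ^ t * (fullInit (fun _ => p) ᵥ* (fullM (fun _ => p)) ^ t) h) := by
  apply Summable.of_nonneg_of_le
    (fun t => mul_nonneg (pow_nonneg hδ0.le t) (w_nonneg p hp t h))
    (fun t => ?_) (summable_geometric_of_lt_one hδ0.le hδ1)
  calc δ ^ t * (fullInit (fun _ => p) ᵥ* (fullM (fun _ => p)) ^ t) h
      ≤ δ ^ t * 1 := by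
        apply mul_le_mul_of_nonneg_left (w_le_one p hp t h) (pow_nonneg hδ0.le t)
    _ = δ ^ t := mul_one _

lemma discMean_cluster (p : Mem1) (hp : p.valid) (focal : Fin n)
    (δ : ℝ) (hδ0 : 0 < δ) (hδ1 : δ < 1) (s : Bool × Fin n) :
    (∑ h ∈ fiber focal s.1 (s.2 : ℕ), discMean δ (fullInit (fun _ => p)) (fullM (fun _ => p)) h)
    = discMean δ (redInitHom n p) (redMHom n p) s := by
  unfold discMean
  rw [← Finset.mul_sum]
  congr 1
  rw [← Summable.tsum_finsetSum (fun h _ => summable_disc p hp δ hδ0 hδ1 h)]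
  apply tsum_congr
  intro t
  rw [← Finset.mul_sum, fiber_sum_eq p hp focal t s]

lemma nCoop_fiber (focal : Fin n) (s : Bool × Fin n) (h : FullState n)
    (hh : h ∈ fiber focal s.1 (s.2 : ℕ)) :
    nCoop h = (s.2 : ℕ) + (if s.1 then 1 else 0) := by
  rw [fiber, Finset.mem_filter] at hh
  obtain ⟨-, hA, hx⟩ := hh
  rw [nCoop_eq focal, hx, hA]

end Aux

/-- When all `n` players use the same memory-1 strategy `p`, the
cooperation rate computed from the full chain's discounted mean distribution equals
that computed from the reduced chain's discounted mean distribution. -/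
theorem cooperation_rate_full_eq_reduced (n : ℕ) (hn : 2 ≤ n)
    (p : Mem1) (hp : p.valid)
    (focal : Fin n) (hfocal : (focal : ℕ) = 0)
    (δ : ℝ) (hδ0 : 0 < δ) (hδ1 : δ < 1) :
    ∑ h : FullState n,
        ((nCoop h : ℝ) / n) * discMean δ (fullInit (fun _ => p)) (fullM (fun _ => p)) h
      = (∑ x : Fin n,
           discMean δ (redInitHom n p) (redMHom n p) (true, x) * (((x:ℕ) + 1) / n))
        + ∑ x : Fin n,
           discMean δ (redInitHom n p) (redMHom n p) (false, x) * ((x:ℕ) / n) := by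

  rw [← Finset.sum_fiberwise_of_maps_to (g := proj focal) (fun h _ => Finset.mem_univ (proj focal h))
      (f := fun h => ((nCoop h : ℝ) / n) * discMean δ (fullInit (fun _ => p)) (fullM (fun _ => p)) h)]
  have hgroup : ∀ s : Bool × Fin n,
      (∑ h ∈ Finset.univ.filter (fun h => proj focal h = s),
        ((nCoop h : ℝ) / n) * discMean δ (fullInit (fun _ => p)) (fullM (fun _ => p)) h)
      = ((((s.2:ℕ) : ℝ) + (if s.1 then 1 else 0)) / n) *
          discMean δ (redInitHom n p) (redMHom n p) s := by
    intro s
    rw [fiber_eq_filter]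
    have hc : ∀ h ∈ fiber focal s.1 (s.2 : ℕ),
        ((nCoop h : ℝ) / n) * discMean δ (fullInit (fun _ => p)) (fullM (fun _ => p)) h
        = ((((s.2:ℕ) : ℝ) + (if s.1 then 1 else 0)) / n) *
            discMean δ (fullInit (fun _ => p)) (fullM (fun _ => p)) h := by
      intro h hh
      rw [nCoop_fiber focal s h hh]
      by_cases hb : s.1 = true
      · rw [hb, if_pos rfl, if_pos rfl]
        push_cast
        ring
      · have hb' : s.1 = false := by simpa using hb
        rw [hb', if_neg (by simp), if_neg (by simp)]
        push_cast
        ring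
    rw [Finset.sum_congr rfl hc, ← Finset.mul_sum, discMean_cluster p hp focal δ hδ0 hδ1 s]
  rw [Finset.sum_congr rfl (fun s _ => hgroup s), Fintype.sum_prod_type, Fintype.sum_bool]
  congr 1
  · apply Finset.sum_congr rfl
    intro x _
    rw [if_pos rfl]
    ring
  · apply Finset.sum_congr rfl
    intro x _
    rw [if_neg (by simp)]
    ring
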